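/- The star product of two Dual Berman codes satisfies B_n^{r1}(m) ⋆ B_n^{r2}(m) = B_n^{r1+r2}(m), for any integers n ≥ 2, m ≥ 1 and non-negative integers r1, r2 with r1 + r2 ≤ m. -/

import Mathlib

open scoped BigOperators

/-- The `l`-th block (of length `n^m`) of a vector of length `n^(m+1)`,
where the first coordinate of the index tuple selects the block. -/
def blockAt (n m : ℕ) (l : Fin n) (v : (Fin (m + 1) → Fin n) → ZMod 2) :
    (Fin m → Fin n) → ZMod 2 :=
  fun j => v (Fin.cons l j)

/-- Berman code `Ber_n^r(m) ⊆ F_2^{n^m}`, coordinates indexed by `H^m` with `H = Fin n`.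
`Ber_n^m(m) = {0}`, `Ber_n^0(m)` is the single parity-check code, and for `1 ≤ r`,
a codeword is a concatenation `(v_0|…|v_{n-1})` with each block in `Ber_n^{r-1}(m-1)`
and the sum of the blocks in `Ber_n^r(m-1)`. -/
def Ber (n : ℕ) : ℕ → (m : ℕ) → Set ((Fin m → Fin n) → ZMod 2)
  | _, 0 => {0}
  | 0, (m + 1) => {c | ∑ i, c i = 0}
  | (r + 1), (m + 1) =>
      {v | (∀ l : Fin n, blockAt n m l v ∈ Ber n r m) ∧
        (fun j => ∑ l : Fin n, v (Fin.cons l j)) ∈ Ber n (r + 1) m}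

/-- Dual Berman code `B_n^r(m) ⊆ F_2^{n^m}`.
`B_n^m(m)` is the full space, `B_n^0(m)` is the repetition code, and for `1 ≤ r`,
a codeword is `(u+u_0|…|u+u_{n-2}|u)` with each `u_l ∈ B_n^{r-1}(m-1)` and `u ∈ B_n^r(m-1)`. -/
def DBer (n : ℕ) : ℕ → (m : ℕ) → Set ((Fin m → Fin n) → ZMod 2)
  | _, 0 => Set.univ
  | 0, (m + 1) => {c | ∃ a : ZMod 2, c = fun _ => a}
  | (r + 1), (m + 1) =>
      {v | ∃ u ∈ DBer n (r + 1) m, ∃ w : Fin n → ((Fin m → Fin n) → ZMod 2),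
        (∀ l, w l ∈ DBer n r m) ∧
        (∀ l : Fin n, blockAt n m l v = if l.val = n - 1 then u else u + w l)}

/-- Star product of two codes: the span of all coordinatewise products. -/
def starProd {ι : Type*} (C D : Set (ι → ZMod 2)) : Submodule (ZMod 2) (ι → ZMod 2) :=
  Submodule.span (ZMod 2) {x | ∃ c ∈ C, ∃ d ∈ D, x = c * d}

/-- Dual code w.r.t. the standard bilinear form. -/
def dualCode {ι : Type*} [Fintype ι] (C : Set (ι → ZMod 2)) : Set (ι → ZMod 2) :=
  {x | ∀ c ∈ C, ∑ i, x i * c i = 0}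

/-- Partial order on tuples: `j ⪯ i` iff `supp(j) ⊆ supp(i)` and `j` agrees with `i` on
`supp(j)`. -/
def preceq {n m : ℕ} (j i : Fin m → Fin n) : Prop :=
  ∀ s, (j s).val ≠ 0 → j s = i s

instance {n m : ℕ} (j i : Fin m → Fin n) : Decidable (preceq j i) := by
  unfold preceq; infer_instance

/-- Hamming weight of a tuple in `H^m`: the number of nonzero entries. -/
def tupleWt {n m : ℕ} (j : Fin m → Fin n) : ℕ :=
  (Finset.univ.filter fun s => (j s).val ≠ 0).card

/-- The vector `c_m(i')`, the indicator of `{i : i ⪯ i'}`. -/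
def cm {n m : ℕ} (i' : Fin m → Fin n) : (Fin m → Fin n) → ZMod 2 :=
  fun i => if preceq i i' then 1 else 0

/-- The vector `d_m(i')`, the indicator of `{i : i ⪰ i'}`. -/
def dm {n m : ℕ} (i' : Fin m → Fin n) : (Fin m → Fin n) → ZMod 2 :=
  fun i => if preceq i' i then 1 else 0

/-- Standard basis vector of `F_2^{n^m}` at coordinate `v`. -/
def eVec {n m : ℕ} (v : Fin m → Fin n) : (Fin m → Fin n) → ZMod 2 :=
  fun i => if i = v then 1 else 0

section StarHelpers

variable {n m : ℕ}

/-- The span of the `dm` vectors of weight at most `r`. -/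
def L (n m r : ℕ) : Submodule (ZMod 2) ((Fin m → Fin n) → ZMod 2) :=
  Submodule.span (ZMod 2) {x | ∃ i' : Fin m → Fin n, tupleWt i' ≤ r ∧ x = dm i'}

lemma L_mono {r r' : ℕ} (h : r ≤ r') : L n m r ≤ L n m r' :=
  Submodule.span_mono (fun x ⟨i', hi, hx⟩ => ⟨i', hi.trans h, hx⟩)

lemma dm_mem_L {i' : Fin m → Fin n} {r : ℕ} (h : tupleWt i' ≤ r) : dm i' ∈ L n m r :=
  Submodule.subset_span ⟨i', h, rfl⟩

lemma preceq_cons {l0 l : Fin n} {j' j : Fin m → Fin n} :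
    preceq (Fin.cons l0 j') (Fin.cons l j) ↔ ((l0.val ≠ 0 → l0 = l) ∧ preceq j' j) := by
  constructor
  · intro h
    refine ⟨fun h0 => ?_, fun s hs => ?_⟩
    · have := h 0 (by simpa using h0)
      simpa using this
    · have := h s.succ (by simpa using hs)
      simpa using this
  · rintro ⟨h0, h⟩ s
    refine Fin.cases ?_ ?_ s
    · intro hs; simpa using h0 (by simpa using hs)
    · intro k hk; simpa using h k (by simpa using hk)

lemma tupleWt_cons (l0 : Fin n) (j' : Fin m → Fin n) :
    tupleWt (Fin.cons l0 j') = (if l0.val ≠ 0 then 1 else 0) + tupleWt j' := by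
  unfold tupleWt
  rw [Finset.card_filter, Finset.card_filter, Fin.sum_univ_succ]
  simp [Fin.cons_succ]

/-- Compatibility of two tuples. -/
def compat (a b : Fin m → Fin n) : Prop :=
  ∀ s, (a s).val ≠ 0 → (b s).val ≠ 0 → a s = b s

/-- Join of two tuples. -/
def joinT (a b : Fin m → Fin n) : Fin m → Fin n :=
  fun s => if (a s).val ≠ 0 then a s else b s

lemma dm_mul_dm_of_compat {a b : Fin m → Fin n} (h : compat a b) :
    dm a * dm b = dm (joinT a b) := by
  funext i
  have key : (preceq a i ∧ preceq b i) ↔ preceq (joinT a b) i := by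
    constructor
    · rintro ⟨ha, hb⟩ s hs
      unfold joinT at hs ⊢
      by_cases h0 : (a s).val ≠ 0
      · rw [if_pos h0] at hs ⊢; exact ha s h0
      · rw [if_neg h0] at hs ⊢; exact hb s hs
    · intro hj
      constructor
      · intro s hs
        have := hj s (by unfold joinT; rw [if_pos hs]; exact hs)
        unfold joinT at this; rwa [if_pos hs] at this
      · intro s hs
        by_cases h0 : (a s).val ≠ 0
        · have := hj s (by unfold joinT; rw [if_pos h0]; exact h0)
          unfold joinT at this; rw [if_pos h0] at this
          rw [← h s h0 hs, this]
        · have := hj s (by unfold joinT; rw [if_neg h0]; exact hs)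
          unfold joinT at this; rwa [if_neg h0] at this
  show (if preceq a i then (1 : ZMod 2) else 0) * (if preceq b i then 1 else 0)
      = if preceq (joinT a b) i then 1 else 0
  rw [ite_mul, one_mul, zero_mul, ← ite_and]
  exact if_congr key rfl rfl

lemma tupleWt_joinT_le (a b : Fin m → Fin n) :
    tupleWt (joinT a b) ≤ tupleWt a + tupleWt b := by
  unfold tupleWt
  have hsub : (Finset.univ.filter fun s => ((joinT a b) s).val ≠ 0) ⊆
      (Finset.univ.filter fun s => (a s).val ≠ 0) ∪
        (Finset.univ.filter fun s => (b s).val ≠ 0) := by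
    intro s hs
    simp only [Finset.mem_filter, Finset.mem_union, Finset.mem_univ, true_and] at hs ⊢
    unfold joinT at hs
    by_cases h0 : (a s).val ≠ 0
    · exact Or.inl h0
    · rw [if_neg h0] at hs; exact Or.inr hs
  exact le_trans (Finset.card_le_card hsub) (Finset.card_union_le _ _)

lemma dm_mul_dm_of_not_compat {a b : Fin m → Fin n} (h : ¬ compat a b) :
    dm a * dm b = 0 := by
  unfold compat at h
  push_neg at h
  obtain ⟨s, ha, hb, hne⟩ := h
  funext i
  show (if preceq a i then (1 : ZMod 2) else 0) * (if preceq b i then 1 else 0) = 0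
  by_cases hpa : preceq a i
  · by_cases hpb : preceq b i
    · exact absurd ((hpa s ha).trans (hpb s hb).symm) hne
    · simp [hpb]
  · simp [hpa]

lemma dm_mul_mem (a b : Fin m → Fin n) {r1 r2 : ℕ}
    (ha : tupleWt a ≤ r1) (hb : tupleWt b ≤ r2) :
    dm a * dm b ∈ L n m (r1 + r2) := by
  by_cases h : compat a b
  · rw [dm_mul_dm_of_compat h]
    exact dm_mem_L (le_trans (tupleWt_joinT_le a b) (Nat.add_le_add ha hb))
  · rw [dm_mul_dm_of_not_compat h]; exact zero_mem _

end StarHelpers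

section StarHelpers2

variable {n m : ℕ} [NeZero n]

lemma tupleWt_zeroTuple : tupleWt (fun _ : Fin m => (0 : Fin n)) = 0 := by
  simp [tupleWt]

lemma dm_zeroTuple : dm (fun _ : Fin m => (0 : Fin n)) = fun _ => (1 : ZMod 2) := by
  funext i
  show (if preceq (fun _ : Fin m => (0 : Fin n)) i then (1 : ZMod 2) else 0) = 1
  rw [if_pos]
  intro s hs
  simp at hs

lemma dm_split (i' : Fin m → Fin n) {r1 r2 : ℕ} (h : tupleWt i' ≤ r1 + r2) :
    ∃ a b : Fin m → Fin n, tupleWt a ≤ r1 ∧ tupleWt b ≤ r2 ∧ dm i' = dm a * dm b := by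
  by_cases h1 : tupleWt i' ≤ r1
  · refine ⟨i', fun _ => 0, h1, by rw [tupleWt_zeroTuple]; exact Nat.zero_le _, ?_⟩
    rw [dm_zeroTuple]
    funext i
    show dm i' i = dm i' i * 1
    rw [mul_one]
  · push_neg at h1
    set S := Finset.univ.filter (fun s => (i' s).val ≠ 0) with hSdef
    have hScard : S.card = tupleWt i' := rfl
    obtain ⟨T, hTS, hT⟩ := Finset.exists_subset_card_eq
      (show r1 ≤ S.card by rw [hScard]; omega)
    have hTval : ∀ s ∈ T, (i' s).val ≠ 0 := by
      intro s hs
      have : s ∈ S := hTS hs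
      rw [hSdef] at this
      simpa using this
    refine ⟨fun s => if s ∈ T then i' s else 0, fun s => if s ∈ T then 0 else i' s, ?_, ?_, ?_⟩
    · have heq : (Finset.univ.filter fun s => ((if s ∈ T then i' s else 0 : Fin n)).val ≠ 0) = T := by
        ext s
        simp only [Finset.mem_filter, Finset.mem_univ, true_and]
        by_cases hsT : s ∈ T
        · simp only [if_pos hsT]
          exact ⟨fun _ => hsT, fun _ => hTval s hsT⟩
        · simp [hsT]
      rw [tupleWt, heq, hT]
    · have heq : (Finset.univ.filter fun s => ((if s ∈ T then 0 else i' s : Fin n)).val ≠ 0) = S \ T := by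
        ext s
        simp only [Finset.mem_filter, Finset.mem_univ, true_and, Finset.mem_sdiff]
        by_cases hsT : s ∈ T
        · simp [hsT]
        · simp only [if_neg hsT, hSdef, Finset.mem_filter, Finset.mem_univ, true_and]
          tauto
      rw [tupleWt, heq, Finset.card_sdiff_of_subset hTS, hT, hScard]
      omega
    · have hcompat : compat (fun s => if s ∈ T then i' s else 0)
          (fun s => if s ∈ T then 0 else i' s) := by
        intro s ha hb
        by_cases hsT : s ∈ T
        · simp only [if_pos hsT] at hb
          simp at hb
        · simp only [if_neg hsT] at ha
          simp at ha
      have hjoin : joinT (fun s => if s ∈ T then i' s else 0)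
          (fun s => if s ∈ T then 0 else i' s) = i' := by
        funext s
        unfold joinT
        by_cases hsT : s ∈ T
        · simp [hsT, hTval s hsT]
        · simp [hsT]
      rw [dm_mul_dm_of_compat hcompat, hjoin]

/-- `liftV x` repeats `x` across all blocks. -/
def liftV (x : (Fin m → Fin n) → ZMod 2) : (Fin (m + 1) → Fin n) → ZMod 2 :=
  fun i => x (Fin.tail i)

/-- `embedV l x` places `x` in the `l`-th block, zero elsewhere. -/
def embedV (l : Fin n) (x : (Fin m → Fin n) → ZMod 2) : (Fin (m + 1) → Fin n) → ZMod 2 :=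
  fun i => if i 0 = l then x (Fin.tail i) else 0

lemma liftV_dm (j' : Fin m → Fin n) :
    liftV (dm j') = dm (Fin.cons (0 : Fin n) j') := by
  funext i
  show dm j' (Fin.tail i) = dm (Fin.cons 0 j') i
  conv_rhs => rw [← Fin.cons_self_tail i]
  show (if preceq j' (Fin.tail i) then (1 : ZMod 2) else 0)
      = if preceq (Fin.cons (0 : Fin n) j') (Fin.cons (i 0) (Fin.tail i)) then 1 else 0
  refine (if_congr ?_ rfl rfl).symm
  rw [preceq_cons]
  simp

lemma embedV_dm_of_ne {l : Fin n} (hl : l.val ≠ 0) (j' : Fin m → Fin n) :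
    embedV l (dm j') = dm (Fin.cons l j') := by
  funext i
  show (if i 0 = l then dm j' (Fin.tail i) else 0) = dm (Fin.cons l j') i
  conv_rhs => rw [← Fin.cons_self_tail i]
  show (if i 0 = l then (if preceq j' (Fin.tail i) then (1 : ZMod 2) else 0) else 0)
      = if preceq (Fin.cons l j') (Fin.cons (i 0) (Fin.tail i)) then 1 else 0
  by_cases hi : i 0 = l
  · rw [if_pos hi]
    refine (if_congr ?_ rfl rfl).symm
    rw [preceq_cons]
    constructor
    · exact And.right
    · intro hj; exact ⟨fun _ => hi.symm, hj⟩
  · rw [if_neg hi, if_neg]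
    rw [preceq_cons]
    rintro ⟨h0, -⟩
    exact hi (h0 hl).symm

lemma liftV_eq_sum (x : (Fin m → Fin n) → ZMod 2) :
    liftV x = ∑ l : Fin n, embedV l x := by
  funext i
  rw [Finset.sum_apply]
  show x (Fin.tail i) = ∑ l : Fin n, if i 0 = l then x (Fin.tail i) else 0
  rw [Finset.sum_ite_eq]
  simp

lemma liftV_mem {x : (Fin m → Fin n) → ZMod 2} {r : ℕ} (hx : x ∈ L n m r) :
    liftV x ∈ L n (m + 1) r := by
  refine Submodule.span_induction ?_ ?_ ?_ ?_ hx
  · rintro y ⟨j', hj', rfl⟩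
    rw [liftV_dm]
    refine dm_mem_L ?_
    rw [tupleWt_cons]
    simpa using hj'
  · have : liftV (0 : (Fin m → Fin n) → ZMod 2) = 0 := rfl
    rw [this]; exact zero_mem _
  · intro a b _ _ ha hb
    have : liftV (a + b) = liftV a + liftV b := rfl
    rw [this]; exact add_mem ha hb
  · intro c a _ ha
    have : liftV (c • a) = c • liftV a := rfl
    rw [this]; exact Submodule.smul_mem _ _ ha

lemma embedV_mem (l : Fin n) {x : (Fin m → Fin n) → ZMod 2} {r : ℕ}
    (hx : x ∈ L n m r) : embedV l x ∈ L n (m + 1) (r + 1) := by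
  refine Submodule.span_induction ?_ ?_ ?_ ?_ hx
  · rintro y ⟨j', hj', rfl⟩
    by_cases hl : l.val = 0
    · have hl0 : l = 0 := Fin.ext (by simpa using hl)
      subst hl0
      have hsum := liftV_eq_sum (n := n) (dm j')
      rw [← Finset.add_sum_erase _ _ (Finset.mem_univ (0 : Fin n))] at hsum
      have key : embedV (0 : Fin n) (dm j')
          = liftV (dm j') - ∑ l' ∈ Finset.univ.erase (0 : Fin n), embedV l' (dm j') :=
        eq_sub_of_add_eq hsum.symm
      rw [key]
      refine sub_mem ?_ (Submodule.sum_mem _ ?_)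
      · exact L_mono (Nat.le_succ r) (liftV_mem (dm_mem_L hj'))
      · intro l' hl'
        have hne : l'.val ≠ 0 := by
          intro hh
          exact (Finset.mem_erase.mp hl').1 (Fin.ext (by simpa using hh))
        rw [embedV_dm_of_ne hne]
        refine dm_mem_L ?_
        rw [tupleWt_cons, if_pos hne]
        omega
    · rw [embedV_dm_of_ne hl]
      refine dm_mem_L ?_
      rw [tupleWt_cons, if_pos hl]
      omega
  · have : embedV l (0 : (Fin m → Fin n) → ZMod 2) = 0 := by
      funext i; show (if i 0 = l then (0:ZMod 2) else 0) = 0; simp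
    rw [this]; exact zero_mem _
  · intro a b _ _ ha hb
    have : embedV l (a + b) = embedV l a + embedV l b := by
      funext i
      show (if i 0 = l then (a + b) (Fin.tail i) else 0) = _
      by_cases hi : i 0 = l <;> simp [embedV, hi]
    rw [this]; exact add_mem ha hb
  · intro c a _ ha
    have : embedV l (c • a) = c • embedV l a := by
      funext i
      show (if i 0 = l then (c • a) (Fin.tail i) else 0) = _
      by_cases hi : i 0 = l <;> simp [embedV, hi]
    rw [this]; exact Submodule.smul_mem _ _ ha

end StarHelpers2

section StarMain

variable {n m : ℕ}

lemma blockAt_dm_cons [NeZero n] (l l0 : Fin n) (j' : Fin m → Fin n) :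
    blockAt n m l (dm (Fin.cons l0 j')) = if l0.val = 0 ∨ l0 = l then dm j' else 0 := by
  by_cases hc : l0.val = 0 ∨ l0 = l
  · rw [if_pos hc]
    funext j
    show (if preceq (Fin.cons l0 j') (Fin.cons l j) then (1 : ZMod 2) else 0)
        = if preceq j' j then 1 else 0
    refine if_congr ?_ rfl rfl
    rw [preceq_cons]
    constructor
    · exact And.right
    · intro hj; exact ⟨fun h0 => hc.resolve_left h0, hj⟩
  · rw [if_neg hc]
    push_neg at hc
    funext j
    show (if preceq (Fin.cons l0 j') (Fin.cons l j) then (1 : ZMod 2) else 0) = 0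
    rw [if_neg]
    rw [preceq_cons]
    rintro ⟨h0, -⟩
    exact hc.2 (h0 hc.1)

lemma DBer_eq_L (hn : 0 < n) : ∀ (m r : ℕ), DBer n r m = ↑(L n m r) := by
  haveI : NeZero n := ⟨hn.ne'⟩
  intro m
  induction m with
  | zero =>
    intro r
    have hD : DBer n r 0 = Set.univ := by cases r <;> rfl
    rw [hD]
    symm
    rw [Set.eq_univ_iff_forall]
    intro x
    have hd0 : x = x (fun s : Fin 0 => s.elim0) • dm (fun s : Fin 0 => s.elim0) := by
      funext i
      have hi : i = (fun s : Fin 0 => s.elim0) := funext fun s => s.elim0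
      rw [hi]
      show x _ = x _ •
        (if preceq (fun s : Fin 0 => s.elim0) (fun s : Fin 0 => s.elim0) then (1 : ZMod 2) else 0)
      rw [if_pos, smul_eq_mul, mul_one]
      intro s
      exact s.elim0
    rw [hd0]
    exact SetLike.mem_coe.mpr (Submodule.smul_mem _ _ (dm_mem_L (by simp [tupleWt])))
  | succ m IH =>
    intro r
    match r with
    | 0 =>
      apply Set.Subset.antisymm
      · rintro c ⟨a, rfl⟩
        have : (fun _ : Fin (m+1) → Fin n => a) = a • dm (fun _ : Fin (m+1) => (0 : Fin n)) := by
          rw [dm_zeroTuple]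
          funext i
          show a = a • (1 : ZMod 2)
          rw [smul_eq_mul, mul_one]
        rw [this]
        exact SetLike.mem_coe.mpr
          (Submodule.smul_mem _ _ (dm_mem_L (by rw [tupleWt_zeroTuple])))
      · intro x hx
        refine Submodule.span_induction ?_ ?_ ?_ ?_ (SetLike.mem_coe.mp hx)
        · rintro y ⟨i', hi', rfl⟩
          refine ⟨1, ?_⟩
          have hall : ∀ s, ¬ ((i' s).val ≠ 0) := by
            intro s hs
            have : s ∈ Finset.univ.filter fun t => (i' t).val ≠ 0 := by
              simp only [Finset.mem_filter, Finset.mem_univ, true_and]; exact hs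
            have hcard := Finset.card_pos.mpr ⟨s, this⟩
            have : tupleWt i' = 0 := Nat.le_zero.mp hi'
            rw [tupleWt] at this
            omega
          funext i
          show (if preceq i' i then (1 : ZMod 2) else 0) = 1
          rw [if_pos]
          intro s hs
          exact absurd hs (hall s)
        · exact ⟨0, rfl⟩
        · rintro x y _ _ ⟨a, rfl⟩ ⟨b, rfl⟩
          exact ⟨a + b, rfl⟩
        · rintro c x _ ⟨a, rfl⟩
          exact ⟨c * a, rfl⟩
    | (r + 1) =>
      apply Set.Subset.antisymm
      · -- DBer ⊆ span
        rintro v ⟨u, hu, w, hw, hblock⟩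
        rw [IH (r + 1)] at hu
        have hu' : u ∈ L n m (r + 1) := SetLike.mem_coe.mp hu
        have hw' : ∀ l, w l ∈ L n m r := by
          intro l
          have := hw l
          rw [IH r] at this
          exact SetLike.mem_coe.mp this
        have hv : v = liftV u
            + ∑ l ∈ Finset.univ.filter (fun l : Fin n => l.val ≠ n - 1), embedV l (w l) := by
          funext i
          have h1 : v i = blockAt n m (i 0) v (Fin.tail i) := by
            show v i = v (Fin.cons (i 0) (Fin.tail i))
            rw [Fin.cons_self_tail]
          rw [h1, hblock (i 0)]
          have h2 : (∑ l ∈ Finset.univ.filter (fun l : Fin n => l.val ≠ n - 1),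
              embedV l (w l)) i
              = ∑ l ∈ Finset.univ.filter (fun l : Fin n => l.val ≠ n - 1),
                  if i 0 = l then w l (Fin.tail i) else 0 := by
            rw [Finset.sum_apply]
            rfl
          rw [Pi.add_apply, h2, Finset.sum_ite_eq]
          by_cases hne : (i 0).val = n - 1
          · rw [if_pos hne, if_neg (by simp [hne])]
            show u (Fin.tail i) = liftV u i + 0
            rw [add_zero]; rfl
          · rw [if_neg hne, if_pos (by simp [hne])]
            show (u + w (i 0)) (Fin.tail i) = liftV u i + w (i 0) (Fin.tail i)
            rw [Pi.add_apply]; rfl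
        rw [hv]
        exact SetLike.mem_coe.mpr (add_mem (liftV_mem hu')
          (Submodule.sum_mem _ (fun l _ => embedV_mem l (hw' l))))
      · -- span ⊆ DBer
        intro v hv
        refine Submodule.span_induction ?_ ?_ ?_ ?_ (SetLike.mem_coe.mp hv)
        · rintro x ⟨i', hi', rfl⟩
          have hi : i' = Fin.cons (i' 0) (Fin.tail i') := (Fin.cons_self_tail i').symm
          set l0 := i' 0 with hl0def
          set j' := Fin.tail i' with hj'def
          rw [hi] at hi' ⊢
          rw [tupleWt_cons] at hi'
          by_cases h0 : l0.val = 0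
          · rw [if_neg (by simpa using h0)] at hi'
            refine ⟨dm j', ?_, fun _ => 0, fun l => ?_, fun l => ?_⟩
            · rw [IH (r + 1)]
              exact SetLike.mem_coe.mpr (dm_mem_L (by omega))
            · rw [IH r]
              exact SetLike.mem_coe.mpr (zero_mem _)
            · rw [blockAt_dm_cons, if_pos (Or.inl h0)]
              split_ifs with hl
              · rfl
              · rw [add_zero]
          · rw [if_pos h0] at hi'
            have hj'wt : tupleWt j' ≤ r := by omega
            by_cases hlast : l0.val = n - 1
            · refine ⟨dm j', ?_, fun _ => dm j', fun l => ?_, fun l => ?_⟩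
              · rw [IH (r + 1)]
                exact SetLike.mem_coe.mpr (dm_mem_L (hj'wt.trans (Nat.le_succ r)))
              · rw [IH r]
                exact SetLike.mem_coe.mpr (dm_mem_L hj'wt)
              · rw [blockAt_dm_cons]
                by_cases hl : l.val = n - 1
                · have hll : l0 = l := Fin.val_injective (hlast.trans hl.symm)
                  rw [if_pos (Or.inr hll), if_pos hl]
                · have hne : l0 ≠ l := fun e => hl (e ▸ hlast)
                  rw [if_neg (by push_neg; exact ⟨h0, hne⟩), if_neg hl]
                  funext j
                  show (0 : ZMod 2) = dm j' j + dm j' j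
                  rw [CharTwo.add_self_eq_zero]
            · refine ⟨0, ?_, fun l => if l = l0 then dm j' else 0, fun l => ?_, fun l => ?_⟩
              · rw [IH (r + 1)]
                exact SetLike.mem_coe.mpr (zero_mem _)
              · rw [IH r]
                by_cases hl : l = l0
                · simp only [if_pos hl]
                  exact SetLike.mem_coe.mpr (dm_mem_L hj'wt)
                · simp only [if_neg hl]
                  exact SetLike.mem_coe.mpr (zero_mem _)
              · rw [blockAt_dm_cons]
                by_cases hl : l = l0
                · have hlv : ¬ (l.val = n - 1) := by rw [hl]; exact hlast
                  rw [if_pos (Or.inr hl.symm), if_neg hlv]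
                  simp only [if_pos hl, zero_add]
                · rw [if_neg (by push_neg; exact ⟨h0, fun e => hl e.symm⟩)]
                  simp only [if_neg hl]
                  split_ifs with hlv
                  · rfl
                  · rw [add_zero]
        · refine ⟨0, ?_, fun _ => 0, fun l => ?_, fun l => ?_⟩
          · rw [IH (r + 1)]; exact SetLike.mem_coe.mpr (zero_mem _)
          · rw [IH r]; exact SetLike.mem_coe.mpr (zero_mem _)
          · have : blockAt n m l (0 : (Fin (m+1) → Fin n) → ZMod 2) = 0 := rfl
            rw [this]
            split_ifs
            · rfl
            · rw [add_zero]
        · rintro x y _ _ ⟨u1, hu1, w1, hw1, hb1⟩ ⟨u2, hu2, w2, hw2, hb2⟩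
          rw [IH (r + 1)] at hu1 hu2
          refine ⟨u1 + u2, ?_, fun l => w1 l + w2 l, fun l => ?_, fun l => ?_⟩
          · rw [IH (r + 1)]
            exact SetLike.mem_coe.mpr (add_mem (SetLike.mem_coe.mp hu1) (SetLike.mem_coe.mp hu2))
          · have h1 := hw1 l; have h2 := hw2 l
            rw [IH r] at h1 h2
            rw [IH r]
            exact SetLike.mem_coe.mpr (add_mem (SetLike.mem_coe.mp h1) (SetLike.mem_coe.mp h2))
          · have : blockAt n m l (x + y) = blockAt n m l x + blockAt n m l y := rfl
            rw [this, hb1 l, hb2 l]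
            split_ifs
            · rfl
            · show u1 + w1 l + (u2 + w2 l) = u1 + u2 + (w1 l + w2 l)
              abel
        · rintro c x _ ⟨u, hu, w, hw, hb⟩
          rw [IH (r + 1)] at hu
          refine ⟨c • u, ?_, fun l => c • w l, fun l => ?_, fun l => ?_⟩
          · rw [IH (r + 1)]
            exact SetLike.mem_coe.mpr (Submodule.smul_mem _ _ (SetLike.mem_coe.mp hu))
          · have h1 := hw l
            rw [IH r] at h1
            rw [IH r]
            exact SetLike.mem_coe.mpr (Submodule.smul_mem _ _ (SetLike.mem_coe.mp h1))
          · have : blockAt n m l (c • x) = c • blockAt n m l x := rfl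
            rw [this, hb l]
            split_ifs
            · rfl
            · rw [smul_add]

lemma mul_mem_L {r1 r2 : ℕ} {c d : (Fin m → Fin n) → ZMod 2}
    (hc : c ∈ L n m r1) (hd : d ∈ L n m r2) : c * d ∈ L n m (r1 + r2) := by
  refine Submodule.span_induction (p := fun c _ => ∀ d ∈ L n m r2, c * d ∈ L n m (r1 + r2))
    ?_ ?_ ?_ ?_ hc d hd
  · rintro x ⟨a, ha, rfl⟩ d hd
    refine Submodule.span_induction (p := fun d _ => dm a * d ∈ L n m (r1 + r2))
      ?_ ?_ ?_ ?_ hd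
    · rintro y ⟨b, hb, rfl⟩
      exact dm_mul_mem a b ha hb
    · show dm a * (0 : (Fin m → Fin n) → ZMod 2) ∈ L n m (r1 + r2)
      rw [mul_zero]; exact zero_mem _
    · intro x y _ _ hx hy
      show dm a * (x + y) ∈ L n m (r1 + r2)
      rw [mul_add]; exact add_mem hx hy
    · intro t x _ hx
      show dm a * (t • x) ∈ L n m (r1 + r2)
      rw [mul_smul_comm]; exact Submodule.smul_mem _ _ hx
  · intro d hd
    show (0 : (Fin m → Fin n) → ZMod 2) * d ∈ L n m (r1 + r2)
    rw [zero_mul]; exact zero_mem _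
  · intro x y _ _ hx hy d hd
    show (x + y) * d ∈ L n m (r1 + r2)
    rw [add_mul]; exact add_mem (hx d hd) (hy d hd)
  · intro t x _ hx d hd
    show (t • x) * d ∈ L n m (r1 + r2)
    rw [smul_mul_assoc]; exact Submodule.smul_mem _ _ (hx d hd)

end StarMain


/-- `B_n^{r1}(m) ⋆ B_n^{r2}(m) = B_n^{r1+r2}(m)` for `n ≥ 2`, `m ≥ 1`,
`r1 + r2 ≤ m`. -/
theorem stmt0 (n m r1 r2 : ℕ) (hn : 2 ≤ n) (hm : 1 ≤ m) (h : r1 + r2 ≤ m) :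
    (starProd (DBer n r1 m) (DBer n r2 m) : Set ((Fin m → Fin n) → ZMod 2)) =
      DBer n (r1 + r2) m := by
  have hn0 : 0 < n := by omega
  haveI : NeZero n := ⟨hn0.ne'⟩
  have key : starProd (DBer n r1 m) (DBer n r2 m) = L n m (r1 + r2) := by
    rw [DBer_eq_L hn0 m r1, DBer_eq_L hn0 m r2]
    apply le_antisymm
    · rw [starProd, Submodule.span_le]
      rintro x ⟨c, hc, d, hd, rfl⟩
      exact SetLike.mem_coe.mpr (mul_mem_L (SetLike.mem_coe.mp hc) (SetLike.mem_coe.mp hd))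
    · rw [L, Submodule.span_le]
      rintro x ⟨i', hi', rfl⟩
      obtain ⟨a, b, ha, hb, hab⟩ := dm_split i' hi'
      apply SetLike.mem_coe.mpr
      apply Submodule.subset_span
      exact ⟨dm a, SetLike.mem_coe.mpr (dm_mem_L ha),
        dm b, SetLike.mem_coe.mpr (dm_mem_L hb), hab⟩
  rw [key]
  exact (DBer_eq_L hn0 m (r1 + r2)).symm
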